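/- Let n ≥ 2 be a natural number and let R : ℝ → ℝ be continuous on [0, ∞) with lim_{T→∞} ∫₀^T R(t) dt = +∞. Then there exist real numbers b and r with 1 < b < r such that ∫₀^1 ((n−1) − t² R(t)) dt − ∫₁^b R(t) dt + ∫_b^r ( (n−1)/(r−b)² − ((r−t)²/(r−b)²) R(t) ) dt ≤ 0. -/

import Mathlib

open Real Filter intervalIntegral

theorem theoremB_analytic_core (n : ℕ) (hn : 2 ≤ n) (R : ℝ → ℝ)
    (hRcont : ContinuousOn R (Set.Ici 0))
    (hRdiv : Tendsto (fun T : ℝ => ∫ t in (0 : ℝ)..T, R t) atTop atTop) :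
    ∃ b r : ℝ, 1 < b ∧ b < r ∧
      (∫ t in (0 : ℝ)..1, (((n : ℝ) - 1) - t ^ 2 * R t))
        - (∫ t in (1 : ℝ)..b, R t)
        + (∫ t in b..r,
            (((n : ℝ) - 1) / (r - b) ^ 2 - (r - t) ^ 2 / (r - b) ^ 2 * R t))
      ≤ 0 := by
  set G : ℝ → ℝ := fun T => ∫ t in (0 : ℝ)..T, R t with hGdef
  -- interval integrability of R on subintervals of [0, ∞)
  have hint : ∀ p q : ℝ, 0 ≤ p → 0 ≤ q → IntervalIntegrable R MeasureTheory.volume p q := by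
    intro p q hp hq
    exact (hRcont.mono (fun x hx => le_trans (le_inf hp hq) hx.1)).intervalIntegrable
  -- continuity of R at positive points
  have hRat : ∀ x : ℝ, 0 < x → ContinuousAt R x := fun x hx =>
    hRcont.continuousAt (Ici_mem_nhds hx)
  -- G has derivative R x at positive x
  have hGderiv : ∀ x : ℝ, 0 < x → HasDerivAt G (R x) x := by
    intro x hx
    exact intervalIntegral.integral_hasDerivAt_right (hint 0 x le_rfl hx.le)
      (ContinuousAt.stronglyMeasurableAtFilter isOpen_Ioi (fun y hy => hRat y hy) x hx)
      (hRat x hx)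
  have hGcont : ∀ x : ℝ, 0 < x → ContinuousAt G x := fun x hx => (hGderiv x hx).continuousAt
  set A : ℝ := ∫ t in (0 : ℝ)..1, (((n : ℝ) - 1) - t ^ 2 * R t) with hAdef
  set M : ℝ := A + G 1 + ((n : ℝ) - 1) with hMdef
  -- Choose c > 1 with G T ≥ M for T ≥ c
  obtain ⟨c₀, hc₀⟩ := (hRdiv.eventually_ge_atTop M).exists_forall_of_atTop
  set c : ℝ := max c₀ 2 with hcdef
  have hc1 : (1 : ℝ) < c := lt_of_lt_of_le one_lt_two (le_max_right _ _)
  have hc0 : (0 : ℝ) < c := lt_trans one_pos hc1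
  have hcM : ∀ T : ℝ, c ≤ T → M ≤ G T := fun T hT =>
    hc₀ T (le_trans (le_max_left _ _) hT)
  -- Choose K ≥ c with G T ≥ G c + 1 for T ≥ K
  obtain ⟨K₀, hK₀⟩ := (hRdiv.eventually_ge_atTop (G c + 1)).exists_forall_of_atTop
  set K : ℝ := max K₀ c with hKdef
  have hcK : c ≤ K := le_max_right _ _
  have hKbig : ∀ T : ℝ, K ≤ T → G c + 1 ≤ G T := fun T hT =>
    hK₀ T (le_trans (le_max_left _ _) hT)
  -- minimize G on [c, K]
  have hGcontOn : ContinuousOn G (Set.Icc c K) := fun x hx =>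
    (hGcont x (lt_of_lt_of_le hc0 hx.1)).continuousWithinAt
  obtain ⟨b, hbmem, hbmin⟩ :=
    isCompact_Icc.exists_isMinOn ⟨c, le_refl c, hcK⟩ hGcontOn
  have hb1 : (1 : ℝ) < b := lt_of_lt_of_le hc1 hbmem.1
  have hb0 : (0 : ℝ) < b := lt_trans one_pos hb1
  -- G t ≥ G b for all t ≥ b
  have hmin : ∀ t : ℝ, b ≤ t → G b ≤ G t := by
    intro t ht
    rcases le_or_gt t K with hK' | hK'
    · exact hbmin ⟨le_trans hbmem.1 ht, hK'⟩
    · have h1 : G b ≤ G c := hbmin ⟨le_refl c, hcK⟩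
      have h2 : G c + 1 ≤ G t := hKbig t hK'.le
      linarith
  -- G b ≥ M
  have hGbM : M ≤ G b := hcM b hbmem.1
  refine ⟨b, b + 1, hb1, by linarith, ?_⟩
  have hr : b + 1 - b = 1 := by ring
  -- F t := ∫ in b..t, R  is nonnegative for t ≥ b
  have hF : ∀ t : ℝ, b ≤ t → 0 ≤ ∫ s in b..t, R s := by
    intro t ht
    have hadd : (∫ s in (0:ℝ)..b, R s) + (∫ s in b..t, R s) = ∫ s in (0:ℝ)..t, R s :=
      intervalIntegral.integral_add_adjacent_intervals (hint 0 b le_rfl hb0.le)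
        (hint b t hb0.le (le_trans hb0.le ht))
    have := hmin t ht
    simp only [hGdef] at this
    linarith [hadd]
  -- key nonnegativity: ∫_b^{b+1} (b+1-t)^2 R t dt ≥ 0 via integration by parts
  have hIBP : (0:ℝ) ≤ ∫ t in b..b + 1, (b + 1 - t) ^ 2 * R t := by
    have hb1' : b ≤ b + 1 := by linarith
    have huIcc : Set.uIcc b (b + 1) = Set.Icc b (b + 1) := Set.uIcc_of_le hb1'
    have hFderiv : ∀ x ∈ Set.Ioo (min b (b+1)) (max b (b+1)),
        HasDerivAt (fun u => ∫ s in b..u, R s) (R x) x := by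
      intro x hx
      rw [min_eq_left hb1'] at hx
      have hx0 : 0 < x := lt_trans hb0 hx.1
      exact intervalIntegral.integral_hasDerivAt_right (hint b x hb0.le hx0.le)
        (ContinuousAt.stronglyMeasurableAtFilter isOpen_Ioi (fun y hy => hRat y hy) x hx0)
        (hRat x hx0)
    have huderiv : ∀ x ∈ Set.Ioo (min b (b+1)) (max b (b+1)),
        HasDerivAt (fun t => (b + 1 - t) ^ 2) (-(2 * (b + 1 - x))) x := by
      intro x _
      have h : HasDerivAt (fun t => (b + 1 - t) ^ 2) (((2 : ℕ) : ℝ) * (b + 1 - id x) ^ (2 - 1) * (0 - 1)) x :=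
        (((hasDerivAt_const x (b + 1)).sub (hasDerivAt_id x)).pow 2)
      convert h using 1
      simp only [id]
      push_cast
      ring
    have hucont : ContinuousOn (fun t => (b + 1 - t) ^ 2) (Set.uIcc b (b + 1)) := by
      fun_prop
    have hFcont : ContinuousOn (fun u => ∫ s in b..u, R s) (Set.uIcc b (b + 1)) := by
      exact intervalIntegral.continuousOn_primitive_interval'
        (hint b (b+1) hb0.le (by linarith)) (Set.left_mem_uIcc)
    have hu'int : IntervalIntegrable (fun x => -(2 * (b + 1 - x))) MeasureTheory.volume b (b+1) :=
      (Continuous.intervalIntegrable (by fun_prop) b (b+1))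
    have hRint : IntervalIntegrable R MeasureTheory.volume b (b + 1) :=
      hint b (b+1) hb0.le (by linarith)
    have key := intervalIntegral.integral_mul_deriv_eq_deriv_mul_of_hasDerivAt
      hucont hFcont huderiv hFderiv hu'int hRint
    have hpos : 0 ≤ ∫ x in b..b+1, 2 * (b + 1 - x) * ∫ s in b..x, R s := by
      apply intervalIntegral.integral_nonneg hb1'
      intro x hx
      have := hF x hx.1
      nlinarith [hx.2]
    have hneg : (∫ x in b..b+1, -(2 * (b + 1 - x)) * ∫ s in b..x, R s)
        = -∫ x in b..b+1, 2 * (b + 1 - x) * ∫ s in b..x, R s := by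
      rw [← intervalIntegral.integral_neg]
      congr 1; funext x; ring
    have h0 : (b + 1 - (b + 1) : ℝ) = 0 := by ring
    rw [key, intervalIntegral.integral_same, hneg, h0]
    simp only [ne_eq, OfNat.ofNat_ne_zero, not_false_eq_true, zero_pow, zero_mul, mul_zero,
      zero_sub, sub_neg_eq_add, zero_add]
    linarith [hpos]
  -- compute the second integral
  have hsecond : (∫ t in (1:ℝ)..b, R t) = G b - G 1 := by
    have hadd : (∫ s in (0:ℝ)..1, R s) + (∫ s in (1:ℝ)..b, R s) = ∫ s in (0:ℝ)..b, R s :=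
      intervalIntegral.integral_add_adjacent_intervals (hint 0 1 le_rfl zero_le_one)
        (hint 1 b zero_le_one hb0.le)
    simp only [hGdef]
    linarith [hadd]
  -- compute/bound the third integral
  have hthird : (∫ t in b..b + 1,
      (((n : ℝ) - 1) / (b + 1 - b) ^ 2 - (b + 1 - t) ^ 2 / (b + 1 - b) ^ 2 * R t))
      ≤ (n : ℝ) - 1 := by
    have hsimp : ∀ t : ℝ, ((n : ℝ) - 1) / (b + 1 - b) ^ 2 - (b + 1 - t) ^ 2 / (b + 1 - b) ^ 2 * R t
        = ((n : ℝ) - 1) - (b + 1 - t) ^ 2 * R t := by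
      intro t; rw [hr]; ring
    simp_rw [hsimp]
    have hRint : IntervalIntegrable (fun t => (b + 1 - t) ^ 2 * R t) MeasureTheory.volume b (b+1) := by
      apply ContinuousOn.intervalIntegrable
      apply ContinuousOn.mul (by fun_prop)
      apply hRcont.mono
      intro x hx
      rw [Set.uIcc_of_le (by linarith : b ≤ b + 1)] at hx
      exact le_trans hb0.le hx.1
    rw [intervalIntegral.integral_sub (intervalIntegrable_const) hRint,
      intervalIntegral.integral_const]
    rw [hr]
    simp only [one_smul, smul_eq_mul]
    linarith [hIBP]
  -- assemble
  have hGbM' : A + G 1 + ((n:ℝ) - 1) ≤ G b := hGbM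
  rw [hsecond]
  linarith [hthird]
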